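/- For nonnegative reals a, b, c, d with c, d > 0 and ℓ ≥ k ≥ 1 integers: a^ℓ/c^{k-1} + b^ℓ/d^{k-1} ≥ 2^{k-ℓ} · (a+b)^ℓ / (c+d)^{k-1}. -/

import Mathlib

open Real

private lemma hcc_helper (u v : ℝ) (hv : 0 < v) (n : ℕ) (hn : 1 ≤ n) :
    v * (u / v) ^ n = u ^ n / v ^ (n - 1) := by
  obtain ⟨m, rfl⟩ : ∃ m, n = m + 1 := ⟨n - 1, by omega⟩
  rw [div_pow, pow_succ]
  simp only [Nat.add_sub_cancel]
  field_simp
  ring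

private lemma hcc_key (a b c d : ℝ) (ha : 0 ≤ a) (hb : 0 ≤ b)
    (hc : 0 < c) (hd : 0 < d) (k ℓ : ℕ) (hk : 1 ≤ k) (hkl : k ≤ ℓ) :
    (a + b) ^ ℓ ≤ 2 ^ (ℓ - k) * (c + d) ^ (k - 1) *
      (a ^ ℓ / c ^ (k - 1) + b ^ ℓ / d ^ (k - 1)) := by
  rcases Nat.lt_or_ge ℓ 2 with h2 | h2
  · have hℓ1 : ℓ = 1 := by omega
    have hk1 : k = 1 := by omega
    subst hℓ1; subst hk1
    simp
  · set L : ℝ := (ℓ : ℝ) with hLdef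
    set K : ℝ := (k : ℝ) with hKdef
    have hL2 : (2:ℝ) ≤ L := by rw [hLdef]; exact_mod_cast h2
    have hK1 : (1:ℝ) ≤ K := by rw [hKdef]; exact_mod_cast hk
    have hKL : K ≤ L := by rw [hKdef, hLdef]; exact_mod_cast hkl
    have hL1 : (0:ℝ) < L - 1 := by linarith
    set θ : ℝ := (K - 1) / (L - 1) with hθdef
    have hθ0 : 0 ≤ θ := div_nonneg (by linarith) hL1.le
    have hθ1 : θ ≤ 1 := by rw [div_le_one hL1]; linarith
    have hθL : θ * (L - 1) = K - 1 := div_mul_cancel₀ _ hL1.ne'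
    have c1 : ((ℓ - 1 : ℕ) : ℝ) = L - 1 := by
      push_cast [Nat.cast_sub (by omega : 1 ≤ ℓ)]; ring
    have c2 : ((ℓ - k : ℕ) : ℝ) = L - K := by
      push_cast [Nat.cast_sub hkl]; ring
    have c3 : ((k - 1 : ℕ) : ℝ) = K - 1 := by
      push_cast [Nat.cast_sub hk]; ring
    have hpow : ∀ x : ℝ, 0 < x → (x ^ θ) ^ (ℓ - 1) = x ^ (k - 1) := by
      intro x hx
      rw [← Real.rpow_natCast (x ^ θ) (ℓ - 1), ← Real.rpow_mul hx.le,
        ← Real.rpow_natCast x (k - 1)]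
      congr 1
      rw [c1, c3, hθL]
    have hcθ : 0 < c ^ θ := rpow_pos_of_pos hc θ
    have hdθ : 0 < d ^ θ := rpow_pos_of_pos hd θ
    set S : ℝ := c ^ θ + d ^ θ with hSdef
    have hS : 0 < S := by positivity
    -- concavity step: S ≤ 2^(1-θ) * (c+d)^θ
    have hconc : S ≤ 2 ^ ((1:ℝ) - θ) * (c + d) ^ θ := by
      have hmid := (Real.concaveOn_rpow hθ0 hθ1).2 (Set.mem_Ici.2 hc.le)
        (Set.mem_Ici.2 hd.le) (by norm_num : (0:ℝ) ≤ 1/2)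
        (by norm_num : (0:ℝ) ≤ 1/2) (by norm_num)
      simp only [smul_eq_mul] at hmid
      have e1 : (1/2 * c + 1/2 * d) ^ θ = (c + d) ^ θ / 2 ^ θ := by
        rw [show (1/2:ℝ) * c + 1/2 * d = (c + d)/2 by ring,
          Real.div_rpow (by positivity) (by norm_num)]
      have e2 : (2:ℝ) ^ ((1:ℝ) - θ) = 2 / 2 ^ θ := by
        rw [Real.rpow_sub (by norm_num), Real.rpow_one]
      rw [e1] at hmid
      rw [e2]
      have h2θ : (0:ℝ) < 2 ^ θ := rpow_pos_of_pos (by norm_num) θ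
      rw [div_mul_eq_mul_div, le_div_iff₀ h2θ]
      have h3 : S ≤ 2 * ((c + d) ^ θ / 2 ^ θ) := by linarith
      have h4 := mul_le_mul_of_nonneg_right h3 h2θ.le
      rw [mul_assoc, div_mul_cancel₀ _ h2θ.ne'] at h4
      exact h4
    -- convexity step
    set w₁ : ℝ := c ^ θ / S with hw₁def
    set w₂ : ℝ := d ^ θ / S with hw₂def
    have hw₁ : 0 < w₁ := by positivity
    have hw₂ : 0 < w₂ := by positivity
    have hsum : w₁ + w₂ = 1 := by rw [hw₁def, hw₂def, ← add_div, div_self hS.ne']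
    have hconv := (convexOn_pow ℓ).2 (Set.mem_Ici.2 (by positivity : (0:ℝ) ≤ a / w₁))
      (Set.mem_Ici.2 (by positivity : (0:ℝ) ≤ b / w₂)) hw₁.le hw₂.le hsum
    try simp only [smul_eq_mul] at hconv
    rw [mul_div_cancel₀ _ hw₁.ne', mul_div_cancel₀ _ hw₂.ne',
      hcc_helper a w₁ hw₁ ℓ (by omega), hcc_helper b w₂ hw₂ ℓ (by omega)] at hconv
    have hw₁pow : w₁ ^ (ℓ - 1) = c ^ (k - 1) / S ^ (ℓ - 1) := by
      rw [hw₁def, div_pow, hpow c hc]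
    have hw₂pow : w₂ ^ (ℓ - 1) = d ^ (k - 1) / S ^ (ℓ - 1) := by
      rw [hw₂def, div_pow, hpow d hd]
    rw [hw₁pow, hw₂pow, div_div_eq_mul_div, div_div_eq_mul_div] at hconv
    have hmain : (a + b) ^ ℓ ≤ S ^ (ℓ - 1) * (a ^ ℓ / c ^ (k - 1) + b ^ ℓ / d ^ (k - 1)) := by
      calc (a + b) ^ ℓ ≤ a ^ ℓ * S ^ (ℓ - 1) / c ^ (k - 1)
            + b ^ ℓ * S ^ (ℓ - 1) / d ^ (k - 1) := hconv
        _ = S ^ (ℓ - 1) * (a ^ ℓ / c ^ (k - 1) + b ^ ℓ / d ^ (k - 1)) := by ring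
    -- bound S^(ℓ-1)
    have hSfin : S ^ (ℓ - 1) ≤ 2 ^ (ℓ - k) * (c + d) ^ (k - 1) := by
      calc S ^ (ℓ - 1) ≤ (2 ^ ((1:ℝ) - θ) * (c + d) ^ θ) ^ (ℓ - 1) :=
            pow_le_pow_left₀ hS.le hconc _
        _ = 2 ^ (ℓ - k) * (c + d) ^ (k - 1) := by
            rw [mul_pow, hpow (c + d) (by positivity)]
            congr 1
            rw [← Real.rpow_natCast ((2:ℝ) ^ ((1:ℝ) - θ)) (ℓ - 1),
              ← Real.rpow_mul (by positivity), ← Real.rpow_natCast (2:ℝ) (ℓ - k)]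
            congr 1
            rw [c1, c2]
            linear_combination -hθL
    calc (a + b) ^ ℓ ≤ S ^ (ℓ - 1) * (a ^ ℓ / c ^ (k - 1) + b ^ ℓ / d ^ (k - 1)) := hmain
      _ ≤ 2 ^ (ℓ - k) * (c + d) ^ (k - 1) * (a ^ ℓ / c ^ (k - 1) + b ^ ℓ / d ^ (k - 1)) := by
          apply mul_le_mul_of_nonneg_right hSfin
          positivity

/-- For nonnegative reals `a, b`, positive reals `c, d`, and integers `ℓ ≥ k ≥ 1`,
`a^ℓ/c^(k-1) + b^ℓ/d^(k-1) ≥ 2^(k-ℓ) · (a+b)^ℓ / (c+d)^(k-1)`. -/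
theorem holder_convexity_core (a b c d : ℝ) (ha : 0 ≤ a) (hb : 0 ≤ b)
    (hc : 0 < c) (hd : 0 < d) (k ℓ : ℕ) (hk : 1 ≤ k) (hkl : k ≤ ℓ) :
    (2 : ℝ) ^ ((k : ℤ) - ℓ) * (a + b) ^ ℓ / (c + d) ^ (k - 1) ≤
      a ^ ℓ / c ^ (k - 1) + b ^ ℓ / d ^ (k - 1) := by
  have h2 : (2 : ℝ) ^ ((k : ℤ) - ℓ) = ((2:ℝ) ^ (ℓ - k : ℕ))⁻¹ := by
    rw [← zpow_natCast (2:ℝ) (ℓ - k), ← zpow_neg]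
    congr 1
    omega
  have key := hcc_key a b c d ha hb hc hd k ℓ hk hkl
  have hQ : (0:ℝ) < (c + d) ^ (k - 1) := by positivity
  have hE : (0:ℝ) < (2:ℝ) ^ (ℓ - k : ℕ) := by positivity
  rw [h2, div_le_iff₀ hQ, inv_mul_le_iff₀ hE]
  calc (a + b) ^ ℓ ≤ 2 ^ (ℓ - k) * (c + d) ^ (k - 1) *
        (a ^ ℓ / c ^ (k - 1) + b ^ ℓ / d ^ (k - 1)) := key
    _ = 2 ^ (ℓ - k) * ((a ^ ℓ / c ^ (k - 1) + b ^ ℓ / d ^ (k - 1)) * (c + d) ^ (k - 1)) := by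
        ring
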